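/- Let p, q ∈ (0,1) with p + q ≥ 1 and let M be the 2×2 matrix with rows (p, 1−p) and (1−q, q). Let u = (1−q)/((1−p)+(1−q)) and let M̄ be the 2×2 matrix with both rows equal to (u, 1−u). Then M^μ converges entrywise to M̄ as μ → ∞, and M satisfies the monotone convergence property: for all indices i, j and all μ ≥ 1, if Mᵢⱼ > M̄ᵢⱼ then Mᵢⱼ ≥ (M^μ)ᵢⱼ ≥ (M^{μ+1})ᵢⱼ ≥ M̄ᵢⱼ, and if Mᵢⱼ < M̄ᵢⱼ then Mᵢⱼ ≤ (M^μ)ᵢⱼ ≤ (M^{μ+1})ᵢⱼ ≤ M̄ᵢⱼ. -/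

import Mathlib

open Matrix Filter

/-- Scalar monotonicity helper. -/
lemma mono_aux (r c b : ℝ) (hr0 : 0 ≤ r) (hr1 : r ≤ 1) (μ : ℕ) (hμ : 1 ≤ μ) :
    (b < b + r * c →
      b ≤ b + r ^ (μ + 1) * c ∧ b + r ^ (μ + 1) * c ≤ b + r ^ μ * c ∧ b + r ^ μ * c ≤ b + r * c) ∧
    (b + r * c < b →
      b + r * c ≤ b + r ^ μ * c ∧ b + r ^ μ * c ≤ b + r ^ (μ + 1) * c ∧ b + r ^ (μ + 1) * c ≤ b) := by
  have h1 : r ^ (μ + 1) ≤ r ^ μ := pow_le_pow_of_le_one hr0 hr1 (Nat.le_succ μ)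
  have h2 : r ^ μ ≤ r ^ 1 := pow_le_pow_of_le_one hr0 hr1 hμ
  have h3 : (0:ℝ) ≤ r ^ (μ + 1) := pow_nonneg hr0 _
  rw [pow_one] at h2
  constructor <;> intro h
  · have hc : 0 < c := by
      rcases le_or_gt c 0 with hc | hc
      · nlinarith
      · exact hc
    refine ⟨by nlinarith, by nlinarith, by nlinarith⟩
  · have hc : c < 0 := by
      rcases le_or_gt 0 c with hc | hc
      · nlinarith
      · exact hc
    refine ⟨by nlinarith, by nlinarith, by nlinarith⟩

theorem stmt3 (p q : ℝ) (hp : p ∈ Set.Ioo (0 : ℝ) 1) (hq : q ∈ Set.Ioo (0 : ℝ) 1)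
    (hpq : 1 ≤ p + q) :
    let M : Matrix (Fin 2) (Fin 2) ℝ := !![p, 1 - p; 1 - q, q]
    let u : ℝ := (1 - q) / ((1 - p) + (1 - q))
    let Mbar : Matrix (Fin 2) (Fin 2) ℝ := !![u, 1 - u; u, 1 - u]
    (∀ i j, Tendsto (fun μ : ℕ => (M ^ μ) i j) atTop (nhds (Mbar i j))) ∧
    (∀ i j, ∀ μ : ℕ, 1 ≤ μ →
      (Mbar i j < M i j →
        Mbar i j ≤ (M ^ (μ + 1)) i j ∧ (M ^ (μ + 1)) i j ≤ (M ^ μ) i j ∧ (M ^ μ) i j ≤ M i j) ∧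
      (M i j < Mbar i j →
        M i j ≤ (M ^ μ) i j ∧ (M ^ μ) i j ≤ (M ^ (μ + 1)) i j ∧ (M ^ (μ + 1)) i j ≤ Mbar i j)) := by
  intro M u Mbar
  obtain ⟨hp0, hp1⟩ := hp
  obtain ⟨hq0, hq1⟩ := hq
  set r : ℝ := p + q - 1 with hr_def
  have hst : (0:ℝ) < (1 - p) + (1 - q) := by nlinarith
  have hst' : ((1:ℝ) - p) + (1 - q) ≠ 0 := ne_of_gt hst
  have hr0 : (0:ℝ) ≤ r := by simp [hr_def]; linarith
  have hr1 : r < 1 := by simp [hr_def]; nlinarith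
  set c : Fin 2 → Fin 2 → ℝ :=
    fun i j => !![(1 - p), -(1 - p); -(1 - q), (1 - q)] i j / ((1 - p) + (1 - q)) with hc_def
  have key : ∀ μ : ℕ, ∀ i j, (M ^ μ) i j = Mbar i j + r ^ μ * c i j := by
    intro μ
    induction μ with
    | zero =>
      intro i j
      fin_cases i <;> fin_cases j <;>
        simp [Mbar, u, c] <;> field_simp <;> ring
    | succ n ih =>
      intro i j
      rw [pow_succ, Matrix.mul_apply, Fin.sum_univ_two, ih, ih]
      fin_cases i <;> fin_cases j <;>
        · simp only [M, Mbar, u, c, hr_def, Matrix.cons_val', Matrix.cons_val_zero,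
            Matrix.cons_val_one, Matrix.head_cons, Matrix.empty_val', Matrix.cons_val_fin_one,
            Matrix.head_fin_const, Fin.zero_eta, Fin.mk_one, Fin.isValue, Matrix.of_apply]
          field_simp
          ring
  have hM1 : ∀ i j, M i j = Mbar i j + r * c i j := by
    intro i j
    have := key 1 i j
    rwa [pow_one, pow_one] at this
  constructor
  · intro i j
    simp only [key]
    have : Tendsto (fun μ : ℕ => r ^ μ) atTop (nhds 0) :=
      tendsto_pow_atTop_nhds_zero_of_lt_one hr0 hr1
    have h := (this.mul_const (c i j)).const_add (Mbar i j)
    simpa using h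
  · intro i j μ hμ
    have := mono_aux r (c i j) (Mbar i j) hr0 hr1.le μ hμ
    rw [key μ i j, key (μ + 1) i j, hM1 i j]
    exact this
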